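/- For every partition I of a cycle graph C_n into tubes with I not the full vertex set, the contracted graph C_n/I is a cycle C_{|I|}, every block induces a path, and a partition of C_n of this type with k blocks has exactly k edges between distinct blocks; moreover, under the rotation action of Z/n on tube partitions of C_n, each orbit Orb(J) of a partition J with |J| blocks satisfies n·|Orb(J) ∩ Π_gr(P_n)| = |J|·|Orb(J)|, where Π_gr(P_n) is identified with the tube partitions of C_n avoiding the edge (n,1). -/

import Mathlib

open scoped Classical

def IsGraphPartition {V : Type*} (Γ : SimpleGraph V) (r : Setoid V) : Prop :=
  ∀ v : V, (Γ.induce {w | r w v}).Connected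

def contractSetoid {V : Type*} (Γ : SimpleGraph V) (r : Setoid V) :
    SimpleGraph (Quotient r) :=
  SimpleGraph.fromRel fun a b =>
    ∃ v w : V, Quotient.mk r v = a ∧ Quotient.mk r w = b ∧ Γ.Adj v w

/-- The rotation of a setoid (partition) of `Fin n` by `a`:
`v` is related to `w` iff `v - a` is related to `w - a`. -/
def rotS {n : ℕ} (a : Fin n) (r : Setoid (Fin n)) : Setoid (Fin n) :=
  ⟨fun v w => r (v - a) (w - a),
    ⟨fun _ => r.iseqv.refl _, fun h => r.iseqv.symm h, fun h h' => r.iseqv.trans h h'⟩⟩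

set_option linter.unusedVariables false
set_option linter.unusedSectionVars false

open Fin.NatCast Fin.CommRing

section helpers
variable {n : ℕ} [NeZero n]

lemma fcast_inj {i j : ℕ} (hi : i < n) (hj : j < n) (h : (i : Fin n) = (j : Fin n)) : i = j := by
  have := congrArg Fin.val h
  rwa [Fin.val_natCast, Fin.val_natCast, Nat.mod_eq_of_lt hi, Nat.mod_eq_of_lt hj] at this

lemma add_cast_cast (x : Fin n) (i j : ℕ) :
    x + (i : Fin n) + (j : Fin n) = x + ((i + j : ℕ) : Fin n) := by
  push_cast; ring

lemma decomp (w x : Fin n) : w = x + (((w - x).val : ℕ) : Fin n) := by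
  rw [Fin.cast_val_eq_self]; ring

lemma val_of_cast {i : ℕ} (h : i < n) : ((i : Fin n)).val = i := by
  rw [Fin.val_natCast]; exact Nat.mod_eq_of_lt h

lemma cast_sub_one {t : ℕ} (h : 1 ≤ t) : ((t : ℕ) : Fin n) - 1 = ((t - 1 : ℕ) : Fin n) := by
  have : ((t - 1 : ℕ) : Fin n) + 1 = ((t : ℕ) : Fin n) := by
    conv_rhs => rw [show t = (t - 1) + 1 by omega]
    push_cast; ring
  linear_combination -this

omit [NeZero n] in
lemma mod_helper {A B : ℕ} (h : A = B + n ∨ A = B) (hB : B < n) : A % n = B := by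
  rcases h with h | h
  · rw [h, Nat.add_mod_right, Nat.mod_eq_of_lt hB]
  · rw [h, Nat.mod_eq_of_lt hB]

end helpers

section arc
variable {n : ℕ} [NeZero n] (r : Setoid (Fin n))

lemma arc (hn : 3 ≤ n) (hr : IsGraphPartition (SimpleGraph.cycleGraph n) r)
    (hr' : r ≠ ⊤) (v : Fin n) :
    ∃ (a : Fin n) (m : ℕ), 0 < m ∧ m < n ∧ ∀ w, r w v ↔ ∃ i : ℕ, i < m ∧ w = a + (i : Fin n) := by
  have hone : (1 : Fin n).val = 1 := by
    rw [Fin.val_one']; exact Nat.mod_eq_of_lt (by omega)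
  -- the block of v is proper
  have hu : ∃ u, ¬ r u v := by
    by_contra h
    push_neg at h
    exact hr' (Setoid.ext fun x y =>
      iff_of_true (r.trans (h x) (r.symm (h y))) trivial)
  obtain ⟨u, hu⟩ := hu
  -- find start a of the block
  have hex : ∃ t : ℕ, r (u + (t : Fin n)) v := by
    refine ⟨(v - u).val, ?_⟩
    rw [← decomp]
  set t₀ := Nat.find hex with ht₀
  have ht0spec : r (u + (t₀ : Fin n)) v := Nat.find_spec hex
  have ht0pos : 1 ≤ t₀ := by
    rcases Nat.eq_zero_or_pos t₀ with h | h
    · exfalso; apply hu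
      have := ht0spec; rw [h] at this; simpa using this
    · exact h
  set a := u + (t₀ : Fin n) with ha_def
  have ha : r a v := ht0spec
  have ha' : ¬ r (a - 1) v := by
    have : a - 1 = u + ((t₀ - 1 : ℕ) : Fin n) := by
      have : ((t₀ : ℕ) : Fin n) = ((t₀ - 1 : ℕ) : Fin n) + 1 := by
        conv_lhs => rw [show t₀ = (t₀ - 1) + 1 by omega]
        push_cast; ring
      rw [ha_def, this]; ring
    rw [this]
    exact Nat.find_min hex (by omega)
  -- find the length m of the block
  have hexm : ∃ i : ℕ, ¬ r (a + (i : Fin n)) v := by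
    refine ⟨n - 1, ?_⟩
    have : a + ((n - 1 : ℕ) : Fin n) = a - 1 := by
      have h1 : ((n - 1 : ℕ) : Fin n) = -1 := by
        have : ((n - 1 : ℕ) : Fin n) + 1 = 0 := by
          have : (((n - 1) + 1 : ℕ) : Fin n) = ((n : ℕ) : Fin n) := by
            congr 1; omega
          push_cast at this ⊢
          rw [this]; simp
        linear_combination this
      rw [h1]; ring
    rw [this]; exact ha'
  set m := Nat.find hexm with hm
  have hmspec : ¬ r (a + (m : Fin n)) v := Nat.find_spec hexm
  have hmpos : 0 < m := by
    rcases Nat.eq_zero_or_pos m with h | h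
    · exfalso; apply hmspec; rw [h]; simpa using ha
    · exact h
  have hmlt : m ≤ n - 1 := Nat.find_le (by
    have : a + ((n - 1 : ℕ) : Fin n) = a - 1 := by
      have h1 : ((n - 1 : ℕ) : Fin n) = -1 := by
        have : ((n - 1 : ℕ) : Fin n) + 1 = 0 := by
          have : (((n - 1) + 1 : ℕ) : Fin n) = ((n : ℕ) : Fin n) := by
            congr 1; omega
          push_cast at this ⊢
          rw [this]; simp
        linear_combination this
      rw [h1]; ring
    rw [this]; exact ha')
  have hmem : ∀ i < m, r (a + (i : Fin n)) v := by
    intro i hi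
    by_contra h
    exact absurd (Nat.find_min hexm hi) (by simp [h])
  refine ⟨a, m, hmpos, by omega, fun w => ⟨?_, ?_⟩⟩
  · -- hard direction
    intro hw
    refine ⟨(w - a).val, ?_, (decomp w a)⟩
    by_contra hj
    push_neg at hj
    set j := (w - a).val with hjdef
    have hjn : j < n := (w - a).isLt
    have hjne : j ≠ n - 1 := by
      intro h
      apply ha'
      have : w = a - 1 := by
        rw [decomp w a, ← hjdef, h]
        have h1 : ((n - 1 : ℕ) : Fin n) = -1 := by
          have : ((n - 1 : ℕ) : Fin n) + 1 = 0 := by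
            have : (((n - 1) + 1 : ℕ) : Fin n) = ((n : ℕ) : Fin n) := by
              congr 1; omega
            push_cast at this ⊢
            rw [this]; simp
          linear_combination this
        rw [h1]; ring
      rwa [← this]
    have hjm : j ≠ m := by
      intro h
      apply hmspec
      rw [← h, ← decomp]; exact hw
    have hj1 : m < j := by omega
    have hj2 : j < n - 1 := by omega
    -- connectivity argument
    set S : Set (Fin n) := {w | r w v} with hS
    have hwS : w ∈ S := hw
    have haS : a ∈ S := ha
    set G' := (SimpleGraph.cycleGraph n).induce S with hG'
    have hreach : G'.Reachable ⟨w, hwS⟩ ⟨a, haS⟩ := (hr v).preconnected _ _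
    obtain ⟨p⟩ := hreach
    clear_value G'
    have key : ∀ (x y : ↥S) (p : G'.Walk x y), ((y : Fin n) - a).val = 0 →
        m < ((x : Fin n) - a).val → ((x : Fin n) - a).val < n - 1 → False := by
      intro x y p
      induction p with
      | nil => intro h0 h1 _; omega
      | @cons x' y' z' hadj q ih =>
        intro h0 h1 h2
        have hadj' : (SimpleGraph.cycleGraph n).Adj (x' : Fin n) (y' : Fin n) := by
          rw [hG'] at hadj; exact hadj
        set t := ((x' : Fin n) - a).val with htdef
        have htn : t < n := Fin.isLt _
        rw [SimpleGraph.cycleGraph_adj'] at hadj'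
        have hyS : (y' : Fin n) ∈ S := y'.2
        have hxa : (x' : Fin n) - a = ((t : ℕ) : Fin n) := (Fin.cast_val_eq_self _).symm
        have hval : (((y' : Fin n) - a).val = t + 1) ∨ (((y' : Fin n) - a).val = t - 1) := by
          rcases hadj' with h | h
          · -- x' - y' = 1, so y' = x' - 1
            right
            have hy : (y' : Fin n) - a = ((x' : Fin n) - a) - 1 := by
              have hx1 : (x' : Fin n) - (y' : Fin n) = 1 := by
                apply Fin.ext; rw [hone]; exact h
              linear_combination -hx1
            rw [hy, hxa, cast_sub_one (by omega), val_of_cast (by omega)]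
          · -- y' - x' = 1, so y' = x' + 1
            left
            have hy : (y' : Fin n) - a = ((x' : Fin n) - a) + 1 := by
              have hx1 : (y' : Fin n) - (x' : Fin n) = 1 := by
                apply Fin.ext; rw [hone]; exact h
              linear_combination hx1
            rw [hy, hxa, show ((t : ℕ) : Fin n) + 1 = ((t + 1 : ℕ) : Fin n) by push_cast; ring,
              val_of_cast (by omega)]
        have hymem : ∀ s : ℕ, ((y' : Fin n) - a).val = s → s ≠ m ∧ s ≠ n - 1 := by
          intro s hs
          constructor
          · intro h; apply hmspec
            have : (y' : Fin n) = a + ((m : ℕ) : Fin n) := by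
              rw [decomp (y' : Fin n) a, hs, h]
            rw [← this]; exact hyS
          · intro h; apply ha'
            have : (y' : Fin n) = a - 1 := by
              rw [decomp (y' : Fin n) a, hs, h]
              have h1 : ((n - 1 : ℕ) : Fin n) = -1 := by
                have : ((n - 1 : ℕ) : Fin n) + 1 = 0 := by
                  have : (((n - 1) + 1 : ℕ) : Fin n) = ((n : ℕ) : Fin n) := by
                    congr 1; omega
                  push_cast at this ⊢
                  rw [this]; simp
                linear_combination this
              rw [h1]; ring
            rw [← this]; exact hyS
        rcases hval with h | h
        · have := hymem _ h
          exact ih h0 (by omega) (by omega)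
        · have := hymem _ h
          exact ih h0 (by omega) (by omega)
    exact key ⟨w, hwS⟩ ⟨a, haS⟩ p (by simp) hj1 hj2
  · rintro ⟨i, hi, rfl⟩
    exact hmem i hi

end arc

section derived
variable {n : ℕ} [NeZero n] {r : Setoid (Fin n)}

lemma exists_E (hn : 3 ≤ n) (hr : IsGraphPartition (SimpleGraph.cycleGraph n) r)
    (hr' : r ≠ ⊤) :
    ∃ E : Fin n → Fin n,
      (∀ v, r (E v) v) ∧
      (∀ v, ¬ r (E v) (E v + 1)) ∧
      (∀ v d, ¬ r d (d + 1) → r d v → d = E v) ∧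
      (∀ (v : Fin n) (j : ℕ), j < ((E v) - v).val → r (v + (j : Fin n)) (v + (j : Fin n) + 1)) := by
  choose A M h0 hlt hch using arc r hn hr hr'
  set E : Fin n → Fin n := fun v => A v + ((M v - 1 : ℕ) : Fin n) with hE
  have hE1 : ∀ v, E v + 1 = A v + ((M v : ℕ) : Fin n) := by
    intro v
    rw [hE]
    simp only
    rw [add_assoc, show ((M v - 1 : ℕ) : Fin n) + 1 = ((M v : ℕ) : Fin n) by
      conv_rhs => rw [show M v = (M v - 1) + 1 by have := h0 v; omega]
      push_cast; ring]
  have f1 : ∀ v, r (E v) v := fun v => (hch v (E v)).mpr ⟨M v - 1, by have := h0 v; omega, rfl⟩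
  have f2 : ∀ v, ¬ r (E v) (E v + 1) := by
    intro v h
    have h' : r (E v + 1) v := r.trans (r.symm h) (f1 v)
    obtain ⟨i, hi, heq⟩ := (hch v _).mp h'
    rw [hE1 v] at heq
    have : (M v : ℕ) = (i : ℕ) := by
      apply fcast_inj (hlt v) (by have := hlt v; omega)
      exact add_left_cancel heq
    omega
  have f3 : ∀ v d, ¬ r d (d + 1) → r d v → d = E v := by
    intro v d hd hdv
    obtain ⟨i, hi, heq⟩ := (hch v d).mp hdv
    have hMv := h0 v
    have hMv' := hlt v
    have : i = M v - 1 := by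
      by_contra hne
      apply hd
      have hd1 : d + 1 = A v + ((i + 1 : ℕ) : Fin n) := by
        rw [heq, add_assoc]
        congr 1
        push_cast; ring
      have h1 : r (d + 1) v := (hch v _).mpr ⟨i + 1, by omega, hd1⟩
      exact r.trans hdv (r.symm h1)
    rw [heq, this, hE]
  have f4 : ∀ (v : Fin n) (j : ℕ), j < ((E v) - v).val → r (v + (j : Fin n)) (v + (j : Fin n) + 1) := by
    intro v j hj
    have hMv := h0 v
    have hMv' := hlt v
    obtain ⟨i, hi, hveq⟩ := (hch v v).mp (r.refl v)
    have hiM : i ≤ M v - 1 := by omega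
    have hc : ((M v - 1 - i : ℕ) : Fin n) + ((i : ℕ) : Fin n) = ((M v - 1 : ℕ) : Fin n) := by
      conv_rhs => rw [show (M v - 1 : ℕ) = (M v - 1 - i) + i by omega]
      push_cast; ring
    have hEv : E v - v = ((M v - 1 - i : ℕ) : Fin n) := by
      show A v + ((M v - 1 : ℕ) : Fin n) - v = _
      linear_combination -hveq - hc
    rw [hEv, val_of_cast (by omega)] at hj
    have hc1 : ((i : ℕ) : Fin n) + ((j : ℕ) : Fin n) = ((i + j : ℕ) : Fin n) := by
      push_cast; ring
    have hc2 : ((i + j : ℕ) : Fin n) + 1 = ((i + j + 1 : ℕ) : Fin n) := by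
      push_cast; ring
    have hw1 : v + (j : Fin n) = A v + ((i + j : ℕ) : Fin n) := by
      linear_combination hveq + hc1
    have hw2 : v + (j : Fin n) + 1 = A v + ((i + j + 1 : ℕ) : Fin n) := by
      linear_combination hw1 + hc2
    have m1 : r (v + (j : Fin n)) v := (hch v _).mpr ⟨i + j, by omega, hw1⟩
    have m2 : r (v + (j : Fin n) + 1) v := (hch v _).mpr ⟨i + j + 1, by omega, hw2⟩
    exact r.trans m1 (r.symm m2)
  exact ⟨E, f1, f2, f3, f4⟩

end derived

section main
variable {n : ℕ} [NeZero n] {r : Setoid (Fin n)}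

lemma val_add' (a b : Fin n) : (a + b).val = (a.val + b.val) % n := by
  rw [Fin.add_def]

lemma val_sub' (a b : Fin n) : (a - b).val = (n - b.val + a.val) % n := by
  rw [Fin.sub_def]

lemma first_unique (hn : 3 ≤ n) {x : Fin n} {t t' : ℕ}
    (h1 : 1 ≤ t) (h2 : t ≤ n)
    (hcut : ¬ r (x + (t : Fin n)) (x + (t : Fin n) + 1))
    (hgap : ∀ s : ℕ, 1 ≤ s → s < t → r (x + (s : Fin n)) (x + (s : Fin n) + 1))
    (h1' : 1 ≤ t') (h2' : t' ≤ n)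
    (hcut' : ¬ r (x + (t' : Fin n)) (x + (t' : Fin n) + 1))
    (hgap' : ∀ s : ℕ, 1 ≤ s → s < t' → r (x + (s : Fin n)) (x + (s : Fin n) + 1)) :
    t = t' := by
  rcases lt_trichotomy t t' with h | h | h
  · exact absurd (hgap' t h1 h) hcut
  · exact h
  · exact absurd (hgap t' h1' h) hcut'

lemma nu_first (hn : 3 ≤ n) (E : Fin n → Fin n)
    (f2 : ∀ v, ¬ r (E v) (E v + 1))
    (f4 : ∀ (v : Fin n) (j : ℕ), j < ((E v) - v).val →
      r (v + (j : Fin n)) (v + (j : Fin n) + 1)) (x : Fin n) :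
    ∃ t : ℕ, 1 ≤ t ∧ t ≤ n ∧ E (x + 1) = x + (t : Fin n) ∧
      (∀ s : ℕ, 1 ≤ s → s < t → r (x + (s : Fin n)) (x + (s : Fin n) + 1)) := by
  set t := (E (x + 1) - (x + 1)).val + 1 with ht
  refine ⟨t, by omega, by have := (E (x + 1) - (x + 1)).isLt; omega, ?_, ?_⟩
  · have hd := decomp (E (x + 1)) (x + 1)
    rw [hd]
    have : ((t : ℕ) : Fin n) = (((E (x + 1) - (x + 1)).val : ℕ) : Fin n) + 1 := by
      rw [ht]; push_cast; ring
    rw [this]; ring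
  · intro s hs1 hs2
    have hstep : x + (s : Fin n) = (x + 1) + ((s - 1 : ℕ) : Fin n) := by
      have : ((s : ℕ) : Fin n) = ((s - 1 : ℕ) : Fin n) + 1 := by
        conv_lhs => rw [show s = (s - 1) + 1 by omega]
        push_cast; ring
      rw [this]; ring
    rw [hstep]
    exact f4 (x + 1) (s - 1) (by omega)

lemma claim1 (hn : 3 ≤ n) (hr' : r ≠ ⊤) (E : Fin n → Fin n)
    (f1 : ∀ v, r (E v) v) (f2 : ∀ v, ¬ r (E v) (E v + 1))
    (f3 : ∀ v d, ¬ r d (d + 1) → r d v → d = E v)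
    (f4 : ∀ (v : Fin n) (j : ℕ), j < ((E v) - v).val →
      r (v + (j : Fin n)) (v + (j : Fin n) + 1)) :
    Nonempty (contractSetoid (SimpleGraph.cycleGraph n) r ≃g
        SimpleGraph.cycleGraph (Nat.card (Quotient r))) ∧
    Nat.card (Quotient r) = (Finset.univ.filter fun d : Fin n => ¬ r d (d + 1)).card := by
  have hone : (1 : Fin n).val = 1 := by
    rw [Fin.val_one']; exact Nat.mod_eq_of_lt (by omega)
  set Dset : Finset (Fin n) := Finset.univ.filter fun d : Fin n => ¬ r d (d + 1) with hDset
  set k := Dset.card with hk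
  set e : Fin k ≃o {x // x ∈ Dset} := Dset.orderIsoOfFin rfl with he
  set d : Fin k → Fin n := fun i => (e i : Fin n) with hd
  have hdD : ∀ i, ¬ r (d i) (d i + 1) := by
    intro i
    exact (Finset.mem_filter.mp (e i).2).2
  have dmono : StrictMono d := by
    intro i j hij
    have := e.strictMono hij
    exact this
  have dinj : Function.Injective d := dmono.injective
  have dsurj : ∀ c : Fin n, ¬ r c (c + 1) → ∃ i, d i = c := by
    intro c hc
    have hmem : c ∈ Dset := Finset.mem_filter.mpr ⟨Finset.mem_univ _, hc⟩
    exact ⟨e.symm ⟨c, hmem⟩, by rw [hd]; simp⟩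
  have ψinj : ∀ c c' : Fin n, ¬ r c (c + 1) → ¬ r c' (c' + 1) → r c c' → c = c' := by
    intro c c' hc hc' hcc'
    exact (f3 c' c hc hcc').trans (f3 c' c' hc' (r.refl c')).symm
  -- k ≥ 2
  have hk2 : 2 ≤ k := by
    have : ∃ x y : Fin n, ¬ r x y := by
      by_contra h
      push_neg at h
      exact hr' (Setoid.ext fun x y => iff_of_true (h x y) trivial)
    obtain ⟨x, y, hxy⟩ := this
    have hne : E x ≠ E y := by
      intro h
      exact hxy (r.trans (r.symm (f1 x)) (h ▸ f1 y))
    have hx : E x ∈ Dset := Finset.mem_filter.mpr ⟨Finset.mem_univ _, f2 x⟩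
    have hy : E y ∈ Dset := Finset.mem_filter.mpr ⟨Finset.mem_univ _, f2 y⟩
    exact Finset.one_lt_card.mpr ⟨E x, hx, E y, hy, hne⟩
  haveI : NeZero k := ⟨by omega⟩
  have honek : (1 : Fin k).val = 1 := by
    rw [Fin.val_one']; exact Nat.mod_eq_of_lt (by omega)
  have hii : ∀ i : Fin k, i ≠ i + 1 := by
    intro i h
    have : (0 : Fin k) = 1 := by linear_combination h
    have := congrArg Fin.val this
    rw [honek] at this
    simp at this
  -- cyclic next
  have CN : ∀ i : Fin k, E (d i + 1) = d (i + 1) := by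
    intro i
    set x := d i with hx
    set y := d (i + 1) with hy
    have hxyne : x ≠ y := fun h => hii i (dinj h)
    set t₁ := (y - x).val with ht₁
    have ht₁pos : 1 ≤ t₁ := by
      rcases Nat.eq_zero_or_pos t₁ with h | h
      · exfalso; apply hxyne
        have h0 : y - x = 0 := Fin.ext (by rw [Fin.val_zero]; omega)
        linear_combination -h0
      · exact h
    have ht₁n : t₁ < n := (y - x).isLt
    have hyx : y = x + ((t₁ : ℕ) : Fin n) := decomp y x
    have hcut₁ : ¬ r (x + ((t₁ : ℕ) : Fin n)) (x + ((t₁ : ℕ) : Fin n) + 1) := by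
      rw [← hyx]; exact hdD (i + 1)
    -- no cut strictly between x and y
    have hgap₁ : ∀ s : ℕ, 1 ≤ s → s < t₁ → r (x + (s : Fin n)) (x + (s : Fin n) + 1) := by
      intro s hs1 hs2
      by_contra hcs
      obtain ⟨j, hj⟩ := dsurj _ hcs
      set X := x.val with hX
      set Y := y.val with hY
      have hXn : X < n := x.isLt
      have hYn : Y < n := y.isLt
      have hC : (x + (s : Fin n)).val = (X + s) % n := by
        rw [Fin.add_def, val_of_cast (by omega)]
      have ht₁eq : t₁ = (n - X + Y) % n := by rw [ht₁, val_sub']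
      rcases lt_or_eq_of_le (show i.val + 1 ≤ k from i.isLt) with hik | hik
      · -- i not last
        have hi1 : (i + 1).val = i.val + 1 := by
          rw [val_add', honek, Nat.mod_eq_of_lt (by omega)]
        have hxy : x < y := dmono (by rw [Fin.lt_def, hi1]; omega)
        have hXY : X < Y := hxy
        have ht₁v : t₁ = Y - X := by
          rw [ht₁eq]; apply mod_helper _ (by omega); left; omega
        have hCv : (x + (s : Fin n)).val = X + s := by
          rw [hC]; exact Nat.mod_eq_of_lt (by omega)
        have h1 : i < j := by
          rw [← dmono.lt_iff_lt, ← hx, hj, Fin.lt_def, hCv]; omega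
        have h2 : j < i + 1 := by
          rw [← dmono.lt_iff_lt, ← hy, hj, Fin.lt_def, hCv]; omega
        rw [Fin.lt_def] at h1 h2
        rw [hi1] at h2
        omega
      · -- i is last, i + 1 = 0
        have hi1 : (i + 1).val = 0 := by
          rw [val_add', honek, hik, Nat.mod_self]
        have hyle : ∀ j' : Fin k, y ≤ d j' := by
          intro j'
          exact dmono.monotone (by rw [Fin.le_def, hi1]; omega)
        have hlex : ∀ j' : Fin k, d j' ≤ x := by
          intro j'
          apply dmono.monotone
          rw [Fin.le_def]
          have := j'.isLt
          omega
        have hYX : Y < X := by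
          have h0i : (i + 1) < i := by
            rw [Fin.lt_def, hi1]; omega
          have := dmono h0i
          exact this
        have ht₁v : t₁ = Y + n - X := by
          rw [ht₁eq]; apply mod_helper _ (by omega); right; omega
        rcases lt_or_ge (X + s) n with hcase | hcase
        · have hCv : (x + (s : Fin n)).val = X + s := by
            rw [hC]; exact Nat.mod_eq_of_lt hcase
          have := hlex j
          rw [hj, Fin.le_def, hCv] at this
          omega
        · have hCv : (x + (s : Fin n)).val = X + s - n := by
            rw [hC]; apply mod_helper _ (by omega); left; omega
          have := hyle j
          rw [hj, Fin.le_def, hCv] at this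
          omega
    -- conclude via uniqueness of first cut
    obtain ⟨t, ht1, htn, htE, htgap⟩ := nu_first hn E f2 f4 x
    have hcutt : ¬ r (x + (t : Fin n)) (x + (t : Fin n) + 1) := by
      rw [← htE]; exact f2 (x + 1)
    have htt : t = t₁ := first_unique hn ht1 htn hcutt htgap ht₁pos (by omega) hcut₁ hgap₁
    rw [htE, htt]
    exact hyx.symm
  -- the quotient bijection
  set Φ : Fin k → Quotient r := fun i => Quotient.mk r (d i) with hΦ
  have Φinj : Function.Injective Φ := by
    intro i j h
    exact dinj (ψinj _ _ (hdD i) (hdD j) (Quotient.exact h))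
  have Φsurj : Function.Surjective Φ := by
    intro q
    induction q using Quotient.ind with
    | _ v =>
      obtain ⟨i, hi⟩ := dsurj (E v) (f2 v)
      exact ⟨i, by rw [hΦ]; simp only; rw [hi]; exact Quotient.sound (f1 v)⟩
  have Φbij : Function.Bijective Φ := ⟨Φinj, Φsurj⟩
  have hcard : Nat.card (Quotient r) = k := by
    rw [← Nat.card_congr (Equiv.ofBijective Φ Φbij), Nat.card_eq_fintype_card, Fintype.card_fin]
  refine ⟨?_, hcard⟩
  -- adjacency
  have hstep : ∀ i j : Fin k, Φ i ≠ Φ j →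
      (∃ v w, Quotient.mk r v = Φ i ∧ Quotient.mk r w = Φ j ∧ (SimpleGraph.cycleGraph n).Adj v w) →
      (j = i + 1 ∨ i = j + 1) := by
    intro i j hne ⟨v, w, hv, hw, hadj⟩
    rw [SimpleGraph.cycleGraph_adj'] at hadj
    have main : ∀ i' j' : Fin k, ∀ v' : Fin n, Quotient.mk r v' = Φ i' →
        Quotient.mk r (v' + 1) = Φ j' → Φ i' ≠ Φ j' → j' = i' + 1 := by
      intro i' j' v' hv' hw' hne'
      have hvcut : ¬ r v' (v' + 1) := by
        intro hrel
        exact hne' (by rw [← hv', ← hw']; exact Quotient.sound hrel)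
      have hvd : v' = d i' := ψinj _ _ hvcut (hdD i') (Quotient.exact hv')
      have hrel2 : r (d j') (v' + 1) := r.symm (Quotient.exact hw')
      have : d j' = E (v' + 1) := f3 _ _ (hdD j') hrel2
      rw [hvd] at this
      rw [CN i'] at this
      exact dinj this
    rcases hadj with h | h
    · -- v - w = 1, v = w + 1
      have hvw : v = w + 1 := by
        have : v - w = 1 := Fin.ext (by rw [hone]; exact h)
        linear_combination this
      right
      exact main j i w hw (by rw [← hvw]; exact hv) hne.symm
    · -- w = v + 1
      have hvw : w = v + 1 := by
        have : w - v = 1 := Fin.ext (by rw [hone]; exact h)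
        linear_combination this
      left
      exact main i j v hv (by rw [← hvw]; exact hw) hne
  have hback : ∀ i : Fin k, (contractSetoid (SimpleGraph.cycleGraph n) r).Adj (Φ i) (Φ (i + 1)) := by
    intro i
    rw [contractSetoid, SimpleGraph.fromRel_adj]
    refine ⟨fun h => hii i (Φinj h), Or.inl ⟨d i, d i + 1, rfl, ?_, ?_⟩⟩
    · exact Quotient.sound (r.symm (CN i ▸ f1 (d i + 1)))
    · rw [SimpleGraph.cycleGraph_adj']
      right
      rw [show d i + 1 - d i = 1 by ring, hone]
  have hadjiff : ∀ i j : Fin k,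
      (contractSetoid (SimpleGraph.cycleGraph n) r).Adj (Φ i) (Φ j) ↔
        (SimpleGraph.cycleGraph k).Adj i j := by
    intro i j
    constructor
    · intro h
      rw [contractSetoid, SimpleGraph.fromRel_adj] at h
      obtain ⟨hne, h | h⟩ := h
      · rcases hstep i j hne h with h' | h'
        · subst h'
          rw [SimpleGraph.cycleGraph_adj']
          right; rw [show i + 1 - i = 1 by ring, honek]
        · subst h'
          rw [SimpleGraph.cycleGraph_adj']
          left; rw [show j + 1 - j = 1 by ring, honek]
      · rcases hstep j i hne.symm h with h' | h'
        · subst h'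
          rw [SimpleGraph.cycleGraph_adj']
          left; rw [show j + 1 - j = 1 by ring, honek]
        · subst h'
          rw [SimpleGraph.cycleGraph_adj']
          right; rw [show i + 1 - i = 1 by ring, honek]
    · intro h
      rw [SimpleGraph.cycleGraph_adj'] at h
      rcases h with h | h
      · have : i = j + 1 := by
          have : i - j = 1 := Fin.ext (by rw [honek]; exact h)
          linear_combination this
        subst this
        exact (hback j).symm
      · have : j = i + 1 := by
          have : j - i = 1 := Fin.ext (by rw [honek]; exact h)
          linear_combination this
        subst this
        exact hback i
  rw [hcard]
  exact ⟨(RelIso.mk (Equiv.ofBijective Φ Φbij) (fun {i j} => hadjiff i j)).symm⟩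

end main

set_option linter.unusedSectionVars false

section rot
variable {n : ℕ} [NeZero n]

lemma rotS_apply (a : Fin n) (r : Setoid (Fin n)) (v w : Fin n) :
    rotS a r v w ↔ r (v - a) (w - a) := Iff.rfl

lemma rotS_rotS (a b : Fin n) (r : Setoid (Fin n)) :
    rotS a (rotS b r) = rotS (a + b) r := by
  apply Setoid.ext
  intro v w
  rw [rotS_apply, rotS_apply, rotS_apply, sub_sub, sub_sub]

lemma rotS_zero (r : Setoid (Fin n)) : rotS 0 r = r := by
  apply Setoid.ext
  intro v w
  rw [rotS_apply, sub_zero, sub_zero]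

lemma rotS_eq_iff (a b : Fin n) (r : Setoid (Fin n)) :
    rotS b r = rotS a r ↔ rotS (b - a) r = r := by
  constructor
  · intro h
    have := congrArg (rotS (-a)) h
    rwa [rotS_rotS, rotS_rotS, neg_add_cancel, rotS_zero, neg_add_eq_sub] at this
  · intro h
    have := congrArg (rotS a) h
    rwa [rotS_rotS, add_sub_cancel] at this

end rot

lemma count_fiber {α β : Type*} [Fintype α] (f : α → β) (c : ℕ)
    (hc : ∀ a : α, Nat.card {b : α // f b = f a} = c) (P : β → Prop) :
    Nat.card {a : α // P (f a)} = c * Nat.card {s : β // (∃ a, f a = s) ∧ P s} := by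
  classical
  set T : Finset β := (Finset.univ.filter fun a => P (f a)).image f with hT
  have h1 : Nat.card {a : α // P (f a)} = (Finset.univ.filter fun a => P (f a)).card := by
    rw [Nat.card_eq_fintype_card, Fintype.card_subtype]
  have h2 : (Finset.univ.filter fun a => P (f a)).card
      = ∑ s ∈ T, ((Finset.univ.filter fun a => P (f a)).filter fun a => f a = s).card :=
    Finset.card_eq_sum_card_fiberwise (fun x hx => Finset.mem_image_of_mem f hx)
  have h3 : ∀ s ∈ T, ((Finset.univ.filter fun a => P (f a)).filter fun a => f a = s).card = c := by
    intro s hs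
    rw [Finset.mem_image] at hs
    obtain ⟨a₀, ha₀, rfl⟩ := hs
    rw [Finset.mem_filter] at ha₀
    have : ((Finset.univ.filter fun a => P (f a)).filter fun a => f a = f a₀)
        = Finset.univ.filter fun a => f a = f a₀ := by
      ext x
      simp only [Finset.mem_filter, Finset.mem_univ, true_and]
      exact ⟨fun h => h.2, fun h => ⟨h ▸ ha₀.2, h⟩⟩
    rw [this, ← hc a₀, Nat.card_eq_fintype_card, Fintype.card_subtype]
  have h4 : T.card = Nat.card {s : β // (∃ a, f a = s) ∧ P s} := by
    rw [← Fintype.card_coe, ← Nat.card_eq_fintype_card]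
    apply Nat.card_congr
    apply Equiv.subtypeEquivRight
    intro s
    simp only [hT, Finset.mem_image, Finset.mem_filter, Finset.mem_univ, true_and]
    constructor
    · rintro ⟨a, ha, rfl⟩; exact ⟨⟨a, rfl⟩, ha⟩
    · rintro ⟨⟨a, rfl⟩, hp⟩; exact ⟨a, hp, rfl⟩
  rw [h1, h2, Finset.sum_congr rfl h3, Finset.sum_const, smul_eq_mul, h4, mul_comm]

section claims
variable {n : ℕ} [NeZero n] {r : Setoid (Fin n)}

lemma claim2 (hn : 3 ≤ n) {v : Fin n} {a : Fin n} {m : ℕ} (h0 : 0 < m) (hmn : m < n)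
    (hch : ∀ w, r w v ↔ ∃ i : ℕ, i < m ∧ w = a + (i : Fin n)) :
    Nonempty ((SimpleGraph.cycleGraph n).induce {w | r w v} ≃g SimpleGraph.pathGraph m) := by
  have hidx : ∀ w : {w : Fin n // w ∈ {w' | r w' v}}, ((w : Fin n) - a).val < m := by
    intro w
    obtain ⟨i, hi, hw⟩ := (hch _).mp w.2
    have h1 : (w : Fin n) - a = ((i : ℕ) : Fin n) := by linear_combination hw
    rw [h1, val_of_cast (by omega)]; exact hi
  have key : ∀ i j : ℕ, i < m → j < m → ((n - j + i) % n = 1 ↔ i = j + 1) := by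
    intro i j hi hj
    constructor
    · intro h
      rcases le_or_gt j i with hle | hlt
      · have : (n - j + i) % n = i - j := mod_helper (by omega) (by omega)
        omega
      · have : (n - j + i) % n = n - j + i := Nat.mod_eq_of_lt (by omega)
        omega
    · intro h
      subst h
      exact mod_helper (by omega) (by omega)
  have hsub : ∀ w w' : {w : Fin n // w ∈ {w' | r w' v}},
      ((w : Fin n) - (w' : Fin n)).val
        = (n - ((w' : Fin n) - a).val + ((w : Fin n) - a).val) % n := by
    intro w w'
    rw [show (w : Fin n) - (w' : Fin n) = ((w : Fin n) - a) - ((w' : Fin n) - a) by ring,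
      val_sub']
  refine ⟨⟨⟨fun w => ⟨((w : Fin n) - a).val, hidx w⟩,
      fun i => ⟨a + ((i.val : ℕ) : Fin n), (hch _).mpr ⟨i.val, i.isLt, rfl⟩⟩, ?_, ?_⟩, ?_⟩⟩
  · intro w
    apply Subtype.ext
    exact (decomp (w : Fin n) a).symm
  · intro i
    apply Fin.ext
    show (a + ((i.val : ℕ) : Fin n) - a).val = i.val
    rw [show a + ((i.val : ℕ) : Fin n) - a = ((i.val : ℕ) : Fin n) by ring,
      val_of_cast (by omega)]
  · intro w w'
    have hiff : ∀ (i j : ℕ) (hi : i < m) (hj : j < m),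
        (SimpleGraph.pathGraph m).Adj ⟨i, hi⟩ ⟨j, hj⟩ ↔ (i + 1 = j ∨ j + 1 = i) := by
      intro i j hi hj
      rw [SimpleGraph.pathGraph_adj]
    show (SimpleGraph.pathGraph m).Adj ⟨((w : Fin n) - a).val, hidx w⟩
        ⟨((w' : Fin n) - a).val, hidx w'⟩ ↔ _
    have hrhs : ((SimpleGraph.cycleGraph n).induce {w' | r w' v}).Adj w w'
        ↔ (SimpleGraph.cycleGraph n).Adj (w : Fin n) (w' : Fin n) := SimpleGraph.comap_adj
    rw [hiff _ _ (hidx w) (hidx w'), hrhs, SimpleGraph.cycleGraph_adj', hsub w w', hsub w' w,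
      key _ _ (hidx w) (hidx w'), key _ _ (hidx w') (hidx w)]
    omega

lemma claim3 (hn : 3 ≤ n) (E : Fin n → Fin n)
    (f1 : ∀ v, r (E v) v) (f2 : ∀ v, ¬ r (E v) (E v + 1))
    (f3 : ∀ v d, ¬ r d (d + 1) → r d v → d = E v) :
    Nat.card {e : Sym2 (Fin n) //
        e ∈ (SimpleGraph.cycleGraph n).edgeSet ∧ ¬ ∃ a b, e = s(a, b) ∧ r a b}
      = (Finset.univ.filter fun d : Fin n => ¬ r d (d + 1)).card := by
  have hone : (1 : Fin n).val = 1 := by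
    rw [Fin.val_one']; exact Nat.mod_eq_of_lt (by omega)
  have h2val : (2 : Fin n).val = 2 := by
    rw [show (2 : Fin n) = ((2 : ℕ) : Fin n) by norm_cast, val_of_cast (by omega)]
  have hF : ∀ d : Fin n, ¬ r d (d + 1) →
      s(d, d + 1) ∈ (SimpleGraph.cycleGraph n).edgeSet ∧
        ¬ ∃ a b, s(d, d + 1) = s(a, b) ∧ r a b := by
    intro d hd
    constructor
    · rw [SimpleGraph.mem_edgeSet, SimpleGraph.cycleGraph_adj']
      right
      rw [show d + 1 - d = 1 by ring, hone]
    · rintro ⟨x, y, he, hxy⟩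
      rw [Sym2.eq_iff] at he
      rcases he with ⟨h1, h2⟩ | ⟨h1, h2⟩
      · subst h1; subst h2; exact hd hxy
      · subst h1; subst h2; exact hd (r.symm hxy)
  set F : {d : Fin n // ¬ r d (d + 1)} →
      {e : Sym2 (Fin n) //
        e ∈ (SimpleGraph.cycleGraph n).edgeSet ∧ ¬ ∃ a b, e = s(a, b) ∧ r a b} :=
    fun d => ⟨s(d.1, d.1 + 1), hF d.1 d.2⟩ with hFdef
  have hFbij : Function.Bijective F := by
    constructor
    · rintro ⟨d, hd⟩ ⟨d', hd'⟩ h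
      apply Subtype.ext
      have he : s(d, d + 1) = s(d', d' + 1) := congrArg Subtype.val h
      rw [Sym2.eq_iff] at he
      rcases he with ⟨h1, h2⟩ | ⟨h1, h2⟩
      · exact h1
      · exfalso
        have h02 : (0 : Fin n) = 2 := by linear_combination h1 - h2
        have := congrArg Fin.val h02
        rw [h2val, Fin.val_zero] at this
        omega
    · rintro ⟨e, he, hne⟩
      induction e using Sym2.ind with
      | _ x y =>
        rw [SimpleGraph.mem_edgeSet, SimpleGraph.cycleGraph_adj'] at he
        rcases he with h | h
        · -- x - y = 1, x = y + 1
          have hxy : x = y + 1 := by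
            have h1 : x - y = 1 := Fin.ext (by rw [hone]; exact h)
            linear_combination h1
          have hcut : ¬ r y (y + 1) := by
            intro hr
            exact hne ⟨y, x, Sym2.eq_swap.symm, hxy ▸ hr⟩
          exact ⟨⟨y, hcut⟩, Subtype.ext (by rw [hFdef]; simp only; rw [← hxy]; exact Sym2.eq_swap)⟩
        · -- y = x + 1
          have hxy : y = x + 1 := by
            have h1 : y - x = 1 := Fin.ext (by rw [hone]; exact h)
            linear_combination h1
          have hcut : ¬ r x (x + 1) := by
            intro hr
            exact hne ⟨x, y, rfl, hxy ▸ hr⟩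
          exact ⟨⟨x, hcut⟩, Subtype.ext (by rw [hFdef]; simp only; rw [← hxy])⟩
  rw [← Nat.card_congr (Equiv.ofBijective F hFbij), Nat.card_eq_fintype_card,
    Fintype.card_subtype]

lemma claim4 (hn : 3 ≤ n) :
    n * Nat.card {s : Setoid (Fin n) // (∃ a, rotS a r = s) ∧ ¬ s (-1 : Fin n) 0} =
      (Finset.univ.filter fun d : Fin n => ¬ r d (d + 1)).card *
        Nat.card {s : Setoid (Fin n) // ∃ a, rotS a r = s} := by
  set c := Nat.card {b : Fin n // rotS b r = r} with hcdef
  have hc : ∀ a : Fin n, Nat.card {b : Fin n // rotS b r = rotS a r} = c := by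
    intro a
    rw [hcdef]
    apply Nat.card_congr
    exact Equiv.subtypeEquiv (Equiv.subRight a) (fun b => by
      rw [Equiv.subRight_apply]; exact rotS_eq_iff a b r)
  have h1 : Nat.card {a : Fin n // ¬ (rotS a r) (-1 : Fin n) 0}
      = c * Nat.card {s : Setoid (Fin n) // (∃ a, rotS a r = s) ∧ ¬ s (-1 : Fin n) 0} :=
    count_fiber (fun a : Fin n => rotS a r) c hc (fun s => ¬ s (-1 : Fin n) 0)
  have h2 : Nat.card {a : Fin n // True}
      = c * Nat.card {s : Setoid (Fin n) // (∃ a, rotS a r = s) ∧ True} :=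
    count_fiber (fun a : Fin n => rotS a r) c hc (fun _ => True)
  have hLHS2 : Nat.card {a : Fin n // True} = n := by
    rw [Nat.card_congr (Equiv.subtypeUnivEquiv fun _ => trivial), Nat.card_eq_fintype_card,
      Fintype.card_fin]
  have hRHS2 : Nat.card {s : Setoid (Fin n) // (∃ a, rotS a r = s) ∧ True}
      = Nat.card {s : Setoid (Fin n) // ∃ a, rotS a r = s} :=
    Nat.card_congr (Equiv.subtypeEquivRight fun s => by simp)
  have hLHS1 : Nat.card {a : Fin n // ¬ (rotS a r) (-1 : Fin n) 0}
      = (Finset.univ.filter fun d : Fin n => ¬ r d (d + 1)).card := by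
    rw [← Fintype.card_subtype, ← Nat.card_eq_fintype_card]
    apply Nat.card_congr
    refine Equiv.subtypeEquiv (Equiv.subLeft (-1 : Fin n)) (fun b => not_congr ?_)
    rw [Equiv.subLeft_apply]
    rw [rotS_apply]
    rw [show (-1 : Fin n) - b + 1 = (0 : Fin n) - b by ring]
  have hn' : (n : ℕ) = c * Nat.card {s : Setoid (Fin n) // ∃ a, rotS a r = s} := by
    rw [← hRHS2, ← h2, hLHS2]
  have hK : (Finset.univ.filter fun d : Fin n => ¬ r d (d + 1)).card
      = c * Nat.card {s : Setoid (Fin n) // (∃ a, rotS a r = s) ∧ ¬ s (-1 : Fin n) 0} := by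
    rw [← h1, hLHS1]
  generalize hO : Nat.card {s : Setoid (Fin n) // ∃ a, rotS a r = s} = O at hn' ⊢
  generalize hX : Nat.card {s : Setoid (Fin n) // (∃ a, rotS a r = s) ∧ ¬ s (-1 : Fin n) 0}
    = X at hK ⊢
  generalize hKK : (Finset.univ.filter fun d : Fin n => ¬ r d (d + 1)).card = K at hK ⊢
  rw [hn', hK]
  ring

end claims

/-- Combinatorics of tube partitions of the cycle `C_n` (vertices `Fin n`,
cut edge `{n-1, 0}` corresponding to the edge `(n,1)`): for a tube partition
`r ≠ ⊤`, the contraction is a cycle on `|I|` vertices, every block induces a path,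
there are exactly `|I|` edges between distinct blocks, and the rotation orbit of
`r` satisfies `n · |Orb(r) ∩ Π_gr(P_n)| = |I| · |Orb(r)|`. -/
theorem stmt14 (n : ℕ) [NeZero n] (hn : 3 ≤ n) (r : Setoid (Fin n))
    (hr : IsGraphPartition (SimpleGraph.cycleGraph n) r) (hr' : r ≠ ⊤) :
    Nonempty (contractSetoid (SimpleGraph.cycleGraph n) r ≃g
        SimpleGraph.cycleGraph (Nat.card (Quotient r))) ∧
    (∀ v : Fin n, ∃ m : ℕ,
      Nonempty ((SimpleGraph.cycleGraph n).induce {w | r w v} ≃g SimpleGraph.pathGraph m)) ∧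
    Nat.card {e : Sym2 (Fin n) //
        e ∈ (SimpleGraph.cycleGraph n).edgeSet ∧ ¬ ∃ a b, e = s(a, b) ∧ r a b} =
      Nat.card (Quotient r) ∧
    n * Nat.card {s : Setoid (Fin n) // (∃ a, rotS a r = s) ∧ ¬ s (-1 : Fin n) 0} =
      Nat.card (Quotient r) * Nat.card {s : Setoid (Fin n) // ∃ a, rotS a r = s} := by
  obtain ⟨E, f1, f2, f3, f4⟩ := exists_E hn hr hr'
  obtain ⟨iso1, hcard⟩ := claim1 hn hr' E f1 f2 f3 f4
  refine ⟨iso1, ?_, ?_, ?_⟩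
  · intro v
    obtain ⟨a, m, h0, hmn, hch⟩ := arc r hn hr hr' v
    exact ⟨m, claim2 hn h0 hmn hch⟩
  · rw [claim3 hn E f1 f2 f3, hcard]
  · rw [hcard]
    exact claim4 hn
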